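/- arXiv:1710.10959 — 3 statements merged into one kernel-verified Lean document; each statement's English description precedes it below -/
import Mathlib

section
/- If γ : [0,1] → ℝⁿ is a piecewise C¹ curve in Minkowski space whose derivative is almost everywhere future-directed timelike, and f : ℝⁿ → ℝ is C¹ with everywhere past-directed timelike gradient satisfying g(∇f,∇f) ≤ −1, then f(γ(1)) − f(γ(0)) ≥ ∫₀¹ √(−g(γ'(t),γ'(t))) dt, i.e., f grows at least by the Lorentzian length of the curve. -/
set_option maxHeartbeats 1000000


/-- The Minkowski bilinear form of signature `(-,+,...,+)` on `Fin n → ℝ`. -/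
def mink {n : ℕ} (v w : Fin n → ℝ) : ℝ :=
  ∑ i : Fin n, (if i.val = 0 then (-1 : ℝ) else 1) * v i * w i

/-- The partial derivative `∂ᵢ f` at `x`. -/
noncomputable def pd {n : ℕ} (f : (Fin n → ℝ) → ℝ) (i : Fin n) (x : Fin n → ℝ) : ℝ :=
  fderiv ℝ f x (Pi.single i 1)

/-- The Lorentzian (Minkowski) gradient `∇f = (−∂₀f, ∂₁f, …, ∂_{n−1}f)`. -/
noncomputable def mgrad {n : ℕ} (f : (Fin n → ℝ) → ℝ) (x : Fin n → ℝ) : Fin n → ℝ :=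
  fun i => (if i.val = 0 then (-1 : ℝ) else 1) * pd f i x

open MeasureTheory Set

lemma mink_split {n : ℕ} (v w : Fin (n+1) → ℝ) :
    mink v w = -(v 0 * w 0) + ∑ i : Fin n, v i.succ * w i.succ := by
  unfold mink
  rw [Fin.sum_univ_succ]
  simp [Fin.val_succ]

lemma spatial_nonneg {n : ℕ} (v : Fin (n+1) → ℝ) :
    (0:ℝ) ≤ ∑ i : Fin n, v i.succ * v i.succ :=
  Finset.sum_nonneg fun i _ => mul_self_nonneg _

/-- Reverse Cauchy–Schwarz for Minkowski space. -/
lemma mink_rcs {n : ℕ} (u v : Fin (n+1) → ℝ) (hu : mink u u ≤ -1) (hu0 : u 0 < 0)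
    (hv : mink v v < 0) (hv0 : 0 < v 0) :
    Real.sqrt (-(mink v v)) ≤ mink u v := by
  have hCS : (∑ i : Fin n, u i.succ * v i.succ) ^ 2 ≤
      (∑ i : Fin n, u i.succ ^ 2) * (∑ i : Fin n, v i.succ ^ 2) :=
    Finset.sum_mul_sq_le_sq_mul_sq _ _ _
  set P := ∑ i : Fin n, u i.succ * v i.succ with hP
  have hSu : ∑ i : Fin n, u i.succ ^ 2 = ∑ i : Fin n, u i.succ * u i.succ := by
    refine Finset.sum_congr rfl fun i _ => ?_; ring
  have hSv : ∑ i : Fin n, v i.succ ^ 2 = ∑ i : Fin n, v i.succ * v i.succ := by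
    refine Finset.sum_congr rfl fun i _ => ?_; ring
  rw [hSu, hSv] at hCS
  set a : ℝ := -(u 0) with hadef
  set c : ℝ := v 0 with hcdef
  set b : ℝ := Real.sqrt (∑ i : Fin n, u i.succ * u i.succ) with hbdef
  set d : ℝ := Real.sqrt (∑ i : Fin n, v i.succ * v i.succ) with hddef
  have hb0 : 0 ≤ b := Real.sqrt_nonneg _
  have hd0 : 0 ≤ d := Real.sqrt_nonneg _
  have hb2 : b * b = ∑ i : Fin n, u i.succ * u i.succ :=
    Real.mul_self_sqrt (spatial_nonneg u)
  have hd2 : d * d = ∑ i : Fin n, v i.succ * v i.succ :=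
    Real.mul_self_sqrt (spatial_nonneg v)
  have huu : mink u u = -(a * a) + b * b := by
    rw [mink_split, hb2, hadef]; ring
  have hvv : mink v v = -(c * c) + d * d := by
    rw [mink_split, hd2]
  have huv : mink u v = a * c + P := by
    rw [mink_split, hadef, hcdef, hP]; ring
  have ha0 : 0 < a := by rw [hadef]; linarith
  have h1 : 1 ≤ a * a - b * b := by rw [huu] at hu; linarith
  have h2 : 0 < c * c - d * d := by rw [hvv] at hv; linarith
  have hCS' : P ^ 2 ≤ (b * d) ^ 2 := by nlinarith [hCS, hb2, hd2]
  have hPbd : -(b * d) ≤ P := by nlinarith [hCS', mul_nonneg hb0 hd0]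
  have hab : b < a := by nlinarith
  have hcd : d < c := by nlinarith
  have hacbd : 0 ≤ a * c - b * d := by nlinarith
  have hkey : c * c - d * d ≤ (a * c - b * d) ^ 2 := by
    nlinarith [sq_nonneg (a * d - b * c), mul_nonneg (by linarith : (0:ℝ) ≤ a * a - b * b - 1) h2.le]
  have : Real.sqrt (-(mink v v)) ≤ a * c - b * d := by
    rw [hvv]
    calc Real.sqrt (-(-(c*c) + d*d)) ≤ Real.sqrt ((a*c - b*d)^2) := by
          apply Real.sqrt_le_sqrt; linarith
      _ = a*c - b*d := Real.sqrt_sq hacbd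
  rw [huv]; linarith

lemma fderiv_eq_sum {n : ℕ} (f : (Fin (n+1) → ℝ) → ℝ) (x v : Fin (n+1) → ℝ) :
    fderiv ℝ f x v = ∑ i : Fin (n+1), v i * pd f i x := by
  have hv : v = ∑ i : Fin (n+1), v i • (Pi.single i 1 : Fin (n+1) → ℝ) := by
    funext j
    simp [Finset.sum_apply, Pi.single_apply]
  conv_lhs => rw [hv]
  rw [map_sum]
  refine Finset.sum_congr rfl fun i _ => ?_
  rw [_root_.map_smul]
  simp [pd, smul_eq_mul]

lemma mink_mgrad_apply {n : ℕ} (f : (Fin (n+1) → ℝ) → ℝ) (x v : Fin (n+1) → ℝ) :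
    mink (mgrad f x) v = fderiv ℝ f x v := by
  rw [fderiv_eq_sum]
  unfold mink mgrad
  refine Finset.sum_congr rfl fun i _ => ?_
  rcases eq_or_ne i.val 0 with h0 | h0 <;> simp [h0] <;> ring

open MeasureTheory in
/-- If `γ` is a piecewise `C¹` curve in Minkowski space whose derivative is a.e.
future-directed timelike, and `f` is `C¹` with everywhere past-directed timelike
gradient satisfying `g(∇f,∇f) ≤ −1` (steep), then `f` grows along `γ` at least by
the Lorentzian length of `γ`. -/
theorem stmt2 (n : ℕ) (γ γ' : ℝ → (Fin (n + 1) → ℝ))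
    (hcont : ContinuousOn γ (Set.Icc 0 1))
    -- `γ` is piecewise `C¹` on `[0,1]` with derivative `γ'` on each piece
    (hpw : ∃ (k : ℕ) (t : Fin (k + 1) → ℝ), StrictMono t ∧ t 0 = 0 ∧ t (Fin.last k) = 1 ∧
      ∀ i : Fin k, (∀ s ∈ Set.Ioo (t i.castSucc) (t i.succ), HasDerivAt γ (γ' s) s) ∧
        ContinuousOn γ' (Set.Icc (t i.castSucc) (t i.succ)))
    (hint : IntervalIntegrable γ' volume 0 1)
    -- the derivative is a.e. future-directed timelike
    (htl : ∀ᵐ s ∂(volume.restrict (Set.Icc (0 : ℝ) 1)),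
      mink (γ' s) (γ' s) < 0 ∧ 0 < γ' s 0)
    (f : (Fin (n + 1) → ℝ) → ℝ) (hf : ContDiff ℝ 1 f)
    -- `f` is steep: `g(∇f,∇f) ≤ −1` with past-directed (timelike) gradient
    (hsteep : ∀ x, mink (mgrad f x) (mgrad f x) ≤ -1)
    (hpast : ∀ x, mgrad f x 0 < 0) :
    (∫ s in (0 : ℝ)..1, Real.sqrt (-(mink (γ' s) (γ' s)))) ≤ f (γ 1) - f (γ 0) := by
  obtain ⟨k, t, hmono, ht0, ht1, hpiece⟩ := hpw
  set F : ℝ → ℝ := fun s => f (γ s) with hF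
  set h : ℝ → ℝ := fun s => mink (mgrad f (γ s)) (γ' s) with hh
  have hfd : Differentiable ℝ f := hf.differentiable one_ne_zero
  have hfc : Continuous f := hfd.continuous
  have hIcc : uIcc (0:ℝ) 1 = Icc 0 1 := uIcc_of_le zero_le_one
  have hIoc : uIoc (0:ℝ) 1 = Ioc 0 1 := uIoc_of_le zero_le_one
  -- continuity of partial derivatives
  have hpdc : ∀ i : Fin (n+1), Continuous (fun x => pd f i x) := by
    intro i
    have hcd : Continuous (fderiv ℝ f) := hf.continuous_fderiv one_ne_zero
    exact hcd.clm_apply continuous_const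
  -- component integrability
  have hcomp : ∀ i : Fin (n+1), IntervalIntegrable (fun s => γ' s i) volume 0 1 := by
    intro i
    constructor <;>
    · first
      | exact (ContinuousLinearMap.proj (R := ℝ) (φ := fun _ : Fin (n+1) => ℝ) i).integrable_comp hint.1
      | exact (ContinuousLinearMap.proj (R := ℝ) (φ := fun _ : Fin (n+1) => ℝ) i).integrable_comp hint.2
  -- h as a sum
  have hhs : ∀ s, h s = ∑ i : Fin (n+1), pd f i (γ s) * γ' s i := by
    intro s
    show mink (mgrad f (γ s)) (γ' s) = _
    rw [mink_mgrad_apply, fderiv_eq_sum]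
    exact Finset.sum_congr rfl fun i _ => mul_comm _ _
  -- integrability of h on [0,1]
  have hhint : IntervalIntegrable h volume 0 1 := by
    have hsum : IntervalIntegrable
        (∑ i : Fin (n+1), fun s => pd f i (γ s) * γ' s i) volume 0 1 := by
      apply IntervalIntegrable.sum
      intro i _
      apply (hcomp i).continuousOn_mul
      rw [hIcc]
      exact (hpdc i).comp_continuousOn hcont
    have heq : (∑ i : Fin (n+1), fun s => pd f i (γ s) * γ' s i) = h := by
      funext s
      rw [hhs s, Finset.sum_apply]
    rwa [heq] at hsum
  -- derivative of F
  have hF' : ∀ i : Fin k, ∀ s ∈ Ioo (t i.castSucc) (t i.succ), HasDerivAt F (h s) s := by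
    intro i s hs
    have hd := (hpiece i).1 s hs
    have hc := (hfd (γ s)).hasFDerivAt.comp_hasDerivAt s hd
    have he : h s = fderiv ℝ f (γ s) (γ' s) := mink_mgrad_apply f (γ s) (γ' s)
    rw [he]
    exact hc
  -- subintervals
  have hsub : ∀ i : Fin k, Icc (t i.castSucc) (t i.succ) ⊆ Icc 0 1 := by
    intro i
    apply Icc_subset_Icc
    · rw [← ht0]; exact hmono.monotone (Fin.zero_le _)
    · rw [← ht1]; exact hmono.monotone (Fin.le_last _)
  have hle : ∀ i : Fin k, t i.castSucc ≤ t i.succ := fun i => (hmono (Fin.castSucc_lt_succ : i.castSucc < i.succ)).le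
  have hFTC : ∀ i : Fin k,
      (∫ s in (t i.castSucc)..(t i.succ), h s) = F (t i.succ) - F (t i.castSucc) := by
    intro i
    apply intervalIntegral.integral_eq_sub_of_hasDeriv_right_of_le (hle i)
    · exact hfc.comp_continuousOn (hcont.mono (hsub i))
    · intro s hs; exact (hF' i s hs).hasDerivWithinAt
    · apply hhint.mono_set
      rw [hIcc, uIcc_of_le (hle i)]
      exact hsub i
  -- ℕ-indexed partition
  set a : ℕ → ℝ := fun j => t ⟨min j k, Nat.lt_succ_of_le (min_le_right j k)⟩ with ha
  have haval : ∀ (j : ℕ) (hj : j ≤ k), a j = t ⟨j, Nat.lt_succ_of_le hj⟩ := by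
    intro j hj
    simp only [ha]
    congr 1
    exact Fin.ext (by simp [min_eq_left hj])
  have ha0 : a 0 = 0 := by rw [haval 0 (Nat.zero_le k)]; simpa using ht0
  have hak : a k = 1 := by rw [haval k le_rfl]; simpa [Fin.last] using ht1
  have hcast : ∀ (i : ℕ) (hi : i < k),
      a i = t (Fin.castSucc ⟨i, hi⟩) ∧ a (i+1) = t (Fin.succ ⟨i, hi⟩) := by
    intro i hi
    constructor
    · rw [haval i hi.le]; rfl
    · rw [haval (i+1) hi]; rfl
  have hintsub : ∀ (i : ℕ), i < k → IntervalIntegrable h volume (a i) (a (i+1)) := by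
    intro i hi
    obtain ⟨e1, e2⟩ := hcast i hi
    rw [e1, e2]
    apply hhint.mono_set
    rw [hIcc, uIcc_of_le (hle ⟨i, hi⟩)]
    exact hsub ⟨i, hi⟩
  have hsum1 : ∑ i ∈ Finset.range k, ∫ s in (a i)..(a (i+1)), h s
      = ∫ s in (0:ℝ)..1, h s := by
    rw [intervalIntegral.sum_integral_adjacent_intervals hintsub, ha0, hak]
  have hsum2 : ∑ i ∈ Finset.range k, ∫ s in (a i)..(a (i+1)), h s = F 1 - F 0 := by
    have : ∀ i ∈ Finset.range k, (∫ s in (a i)..(a (i+1)), h s) = F (a (i+1)) - F (a i) := by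
      intro i hi
      have hi' := Finset.mem_range.1 hi
      obtain ⟨e1, e2⟩ := hcast i hi'
      rw [e1, e2]
      exact hFTC ⟨i, hi'⟩
    rw [Finset.sum_congr rfl this, Finset.sum_range_sub (fun j => F (a j)), ha0, hak]
  have hint01 : (∫ s in (0:ℝ)..1, h s) = F 1 - F 0 := by rw [← hsum1, hsum2]
  -- integrability of the length integrand
  have hQcont : Continuous (fun w : Fin (n+1) → ℝ => Real.sqrt (-(mink w w))) := by
    apply Real.continuous_sqrt.comp
    apply Continuous.neg
    unfold mink
    exact continuous_finset_sum _ fun i _ =>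
      (continuous_const.mul (continuous_apply i)).mul (continuous_apply i)
  have hmeas : AEStronglyMeasurable γ' (volume.restrict (uIoc 0 1)) := by
    rw [hIoc]; exact hint.1.aestronglyMeasurable
  have htlIoc : ∀ᵐ s ∂(volume.restrict (uIoc (0:ℝ) 1)),
      mink (γ' s) (γ' s) < 0 ∧ 0 < γ' s 0 := by
    rw [hIoc]
    exact ae_mono (Measure.restrict_mono Ioc_subset_Icc_self le_rfl) htl
  have hsqint : IntervalIntegrable (fun s => Real.sqrt (-(mink (γ' s) (γ' s)))) volume 0 1 := by
    apply IntervalIntegrable.mono_fun' ((hcomp 0).abs)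
    · exact hQcont.comp_aestronglyMeasurable hmeas
    · filter_upwards [htlIoc] with s hs
      have hb : -(mink (γ' s) (γ' s)) ≤ γ' s 0 * γ' s 0 := by
        rw [mink_split]
        have := spatial_nonneg (γ' s)
        linarith
      have : Real.sqrt (-(mink (γ' s) (γ' s))) ≤ |γ' s 0| := by
        calc Real.sqrt (-(mink (γ' s) (γ' s))) ≤ Real.sqrt (γ' s 0 * γ' s 0) :=
              Real.sqrt_le_sqrt hb
          _ = |γ' s 0| := Real.sqrt_mul_self_eq_abs _
      simpa [Real.norm_eq_abs, abs_of_nonneg (Real.sqrt_nonneg _)] using this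
  -- pointwise comparison a.e.
  have hae : (fun s => Real.sqrt (-(mink (γ' s) (γ' s)))) ≤ᵐ[volume.restrict (Icc (0:ℝ) 1)] h := by
    filter_upwards [htl] with s hs
    exact mink_rcs (mgrad f (γ s)) (γ' s) (hsteep _) (hpast _) hs.1 hs.2
  have hcmp := intervalIntegral.integral_mono_ae_restrict zero_le_one hsqint hhint hae
  rw [hint01] at hcmp
  exact hcmp
end

section
/- In 2-dimensional Minkowski space, the Lorentzian distance between points p ≼ q (q in the causal future of p) satisfies d(p,q) ≤ [f(q) − f(p)]⁺ for every C¹ function f with g(∇f,∇f) ≤ −1 and ∇f past-directed, where [α]⁺ = max(0,α). -/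
/-- The Lorentzian length of a curve on `[0,1]` with derivative `γ'`. -/
noncomputable def plen (γ' : ℝ → (Fin 2 → ℝ)) : ℝ :=
  ∫ s in (0 : ℝ)..1, Real.sqrt (-(mink (γ' s) (γ' s)))

/-- `γ` is a piecewise `C¹` future-directed causal curve from `p` to `q`
in the Minkowski plane, with derivative `γ'`. -/
def IsCausalCurve (γ γ' : ℝ → (Fin 2 → ℝ)) (p q : Fin 2 → ℝ) : Prop :=
  γ 0 = p ∧ γ 1 = q ∧ ContinuousOn γ (Set.Icc 0 1) ∧
  (∃ (k : ℕ) (t : Fin (k + 1) → ℝ), StrictMono t ∧ t 0 = 0 ∧ t (Fin.last k) = 1 ∧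
    ∀ i : Fin k, (∀ s ∈ Set.Ioo (t i.castSucc) (t i.succ), HasDerivAt γ (γ' s) s) ∧
      ContinuousOn γ' (Set.Icc (t i.castSucc) (t i.succ))) ∧
  (∀ᵐ s ∂(MeasureTheory.volume.restrict (Set.Icc (0 : ℝ) 1)),
    mink (γ' s) (γ' s) ≤ 0 ∧ 0 ≤ γ' s 0)

/-- The Lorentzian distance in the Minkowski plane: the supremum of the Lorentzian
lengths of piecewise `C¹` future-directed causal curves from `p` to `q`
(and `0` if no such curve exists). -/
noncomputable def ldist (p q : Fin 2 → ℝ) : ℝ :=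
  sSup (insert 0 {L | ∃ γ γ', IsCausalCurve γ γ' p q ∧ L = plen γ'})

lemma mink_two (v w : Fin 2 → ℝ) : mink v w = -(v 0 * w 0) + v 1 * w 1 := by
  simp [mink, Fin.sum_univ_two]

lemma key_ineq (a b u0 u1 : ℝ) (ha : 0 < a) (hab : 1 ≤ a ^ 2 - b ^ 2)
    (hu : u1 ^ 2 ≤ u0 ^ 2) (hu0 : 0 ≤ u0) :
    Real.sqrt (u0 ^ 2 - u1 ^ 2) ≤ a * u0 + b * u1 := by
  have h2 : (b * u1) ^ 2 ≤ (a * u0) ^ 2 := by nlinarith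
  have habs : |b * u1| ≤ |a * u0| := by
    have h3 := Real.sqrt_le_sqrt h2
    rwa [Real.sqrt_sq_eq_abs, Real.sqrt_sq_eq_abs] at h3
  have hpos : 0 ≤ a * u0 + b * u1 := by
    have h3 : -(b * u1) ≤ |b * u1| := neg_le_abs _
    have h4 : |a * u0| = a * u0 := abs_of_nonneg (mul_nonneg ha.le hu0)
    linarith
  have hsq : u0 ^ 2 - u1 ^ 2 ≤ (a * u0 + b * u1) ^ 2 := by
    nlinarith [sq_nonneg (a * u1 + b * u0), mul_nonneg (by linarith : (0:ℝ) ≤ a ^ 2 - b ^ 2 - 1)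
      (by linarith : (0:ℝ) ≤ u0 ^ 2 - u1 ^ 2)]
  calc Real.sqrt (u0 ^ 2 - u1 ^ 2) ≤ Real.sqrt ((a * u0 + b * u1) ^ 2) := Real.sqrt_le_sqrt hsq
    _ = |a * u0 + b * u1| := Real.sqrt_sq_eq_abs _
    _ = a * u0 + b * u1 := abs_of_nonneg hpos

lemma fderiv_two (f : (Fin 2 → ℝ) → ℝ) (x v : Fin 2 → ℝ) :
    fderiv ℝ f x v = v 0 * pd f 0 x + v 1 * pd f 1 x := by
  have hv : v = v 0 • (Pi.single 0 1 : Fin 2 → ℝ) + v 1 • (Pi.single 1 1 : Fin 2 → ℝ) := by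
    funext j; fin_cases j <;> simp [Pi.single_apply]
  conv_lhs => rw [hv]
  rw [map_add, map_smul, map_smul]
  simp [pd, smul_eq_mul]

/-- In the 2-dimensional Minkowski space, for `q` in the causal future of `p`,
the Lorentzian distance satisfies `d(p,q) ≤ [f(q) − f(p)]⁺` for every steep `C¹`
function `f`. -/
theorem stmt3 (p q : Fin 2 → ℝ)
    (hpq : ∃ γ γ', IsCausalCurve γ γ' p q)
    (f : (Fin 2 → ℝ) → ℝ) (hf : ContDiff ℝ 1 f)
    (hsteep : ∀ x, mink (mgrad f x) (mgrad f x) ≤ -1)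
    (hpast : ∀ x, mgrad f x 0 < 0) :
    ldist p q ≤ max 0 (f q - f p) := by
  have hfd : Differentiable ℝ f := hf.differentiable one_ne_zero
  apply Real.sSup_le _ (le_max_left _ _)
  rintro L hL
  rcases hL with rfl | ⟨γ, γ', ⟨hγ0, hγ1, hγc, ⟨k, t, ht, ht0, htk, hpiece⟩, hcaus⟩, rfl⟩
  · exact le_max_left _ _
  refine le_trans ?_ (le_max_right _ _)
  set g : ℝ → ℝ := fun s => fderiv ℝ f (γ s) (γ' s) with hg
  set H : ℝ → ℝ := fun s => Real.sqrt (-(mink (γ' s) (γ' s))) with hH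
  set a : ℕ → ℝ := fun i => t ⟨min i k, Nat.lt_succ_of_le (min_le_right _ _)⟩ with ha
  have hsubIcc : ∀ i : Fin k, Set.Icc (t i.castSucc) (t i.succ) ⊆ Set.Icc (0 : ℝ) 1 := by
    intro i
    apply Set.Icc_subset_Icc
    · rw [← ht0]; exact ht.monotone (Fin.zero_le _)
    · rw [← htk]; exact ht.monotone (Fin.le_last _)
  have hle : ∀ i : Fin k, t i.castSucc ≤ t i.succ :=
    fun i => (ht (Fin.castSucc_lt_succ (i := i))).le
  have hHint : ∀ i : Fin k,
      IntervalIntegrable H MeasureTheory.volume (t i.castSucc) (t i.succ) := by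
    intro i
    apply ContinuousOn.intervalIntegrable
    rw [Set.uIcc_of_le (hle i)]
    have h0 : ContinuousOn (fun s => γ' s 0) (Set.Icc (t i.castSucc) (t i.succ)) :=
      (continuous_apply (0 : Fin 2)).comp_continuousOn (hpiece i).2
    have h1 : ContinuousOn (fun s => γ' s 1) (Set.Icc (t i.castSucc) (t i.succ)) :=
      (continuous_apply (1 : Fin 2)).comp_continuousOn (hpiece i).2
    apply Real.continuous_sqrt.comp_continuousOn
    have heq : (fun s => -(mink (γ' s) (γ' s)))
        = fun s => γ' s 0 * γ' s 0 - γ' s 1 * γ' s 1 := by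
      funext s; rw [mink_two]; ring
    rw [heq]
    exact (h0.mul h0).sub (h1.mul h1)
  have hgcont : ∀ i : Fin k, ContinuousOn g (Set.Icc (t i.castSucc) (t i.succ)) := by
    intro i
    exact ContinuousOn.clm_apply
      ((hf.continuous_fderiv one_ne_zero).comp_continuousOn (hγc.mono (hsubIcc i)))
      (hpiece i).2
  have hgint : ∀ i : Fin k,
      IntervalIntegrable g MeasureTheory.volume (t i.castSucc) (t i.succ) := by
    intro i
    apply ContinuousOn.intervalIntegrable
    rw [Set.uIcc_of_le (hle i)]
    exact hgcont i
  have hkey : ∀ i : Fin k,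
      (∫ s in (t i.castSucc)..(t i.succ), H s)
        ≤ f (γ (t i.succ)) - f (γ (t i.castSucc)) := by
    intro i
    have hae : H ≤ᵐ[MeasureTheory.volume.restrict (Set.Icc (t i.castSucc) (t i.succ))] g := by
      have hres := MeasureTheory.ae_restrict_of_ae_restrict_of_subset (hsubIcc i) hcaus
      filter_upwards [hres] with s hs
      obtain ⟨hc, hc0⟩ := hs
      have hsteep' := hsteep (γ s)
      have hpast' := hpast (γ s)
      have hA : 0 < pd f 0 (γ s) := by
        have hx : mgrad f (γ s) 0 = -pd f 0 (γ s) := by simp [mgrad]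
        rw [hx] at hpast'; linarith
      have hAB : 1 ≤ pd f 0 (γ s) ^ 2 - pd f 1 (γ s) ^ 2 := by
        rw [mink_two] at hsteep'
        simp only [mgrad, Fin.isValue] at hsteep'
        norm_num at hsteep'
        nlinarith
      have hu : (γ' s 1) ^ 2 ≤ (γ' s 0) ^ 2 := by
        rw [mink_two] at hc; nlinarith
      have := key_ineq (pd f 0 (γ s)) (pd f 1 (γ s)) (γ' s 0) (γ' s 1) hA hAB hu hc0
      calc H s = Real.sqrt ((γ' s 0) ^ 2 - (γ' s 1) ^ 2) := by
            show Real.sqrt (-(mink (γ' s) (γ' s))) = _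
            congr 1; rw [mink_two]; ring
        _ ≤ pd f 0 (γ s) * γ' s 0 + pd f 1 (γ s) * γ' s 1 := this
        _ = g s := by
            show _ = fderiv ℝ f (γ s) (γ' s)
            rw [fderiv_two]; ring
    have h1 : (∫ s in (t i.castSucc)..(t i.succ), H s)
        ≤ ∫ s in (t i.castSucc)..(t i.succ), g s :=
      intervalIntegral.integral_mono_ae_restrict (hle i) (hHint i) (hgint i) hae
    have h2 : (∫ s in (t i.castSucc)..(t i.succ), g s)
        = f (γ (t i.succ)) - f (γ (t i.castSucc)) := by
      apply intervalIntegral.integral_eq_sub_of_hasDerivAt_of_le (hle i)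
        ((hf.continuous.comp_continuousOn hγc).mono (hsubIcc i))
      · intro x hx
        exact (hfd (γ x)).hasFDerivAt.comp_hasDerivAt x ((hpiece i).1 x hx)
      · exact hgint i
    linarith
  have haeq : ∀ i (hi : i < k),
      a i = t (⟨i, hi⟩ : Fin k).castSucc ∧ a (i + 1) = t (⟨i, hi⟩ : Fin k).succ := by
    intro i hi
    constructor <;> (apply congrArg t; apply Fin.ext; simp [Fin.castSucc, Fin.succ]; omega)
  have ha0 : a 0 = 0 := by
    rw [← ht0]; apply congrArg t; apply Fin.ext; simp
  have hak : a k = 1 := by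
    rw [← htk]; apply congrArg t; apply Fin.ext; simp [Fin.last]
  have hsplit : (∫ s in (0:ℝ)..1, H s) = ∑ i ∈ Finset.range k, ∫ s in (a i)..(a (i+1)), H s := by
    rw [intervalIntegral.sum_integral_adjacent_intervals, ha0, hak]
    intro i hi
    obtain ⟨e1, e2⟩ := haeq i hi
    rw [e1, e2]
    exact hHint ⟨i, hi⟩
  have hplen : plen γ' = ∫ s in (0:ℝ)..1, H s := rfl
  rw [hplen, hsplit]
  have htel : ∑ i ∈ Finset.range k, (f (γ (a (i+1))) - f (γ (a i))) = f q - f p := by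
    rw [Finset.sum_range_sub (fun i => f (γ (a i)))]
    rw [ha0, hak, hγ0, hγ1]
  rw [← htel]
  apply Finset.sum_le_sum
  intro i hi
  rw [Finset.mem_range] at hi
  obtain ⟨e1, e2⟩ := haeq i hi
  rw [e1, e2]
  exact hkey ⟨i, hi⟩
end

section
/- In Minkowski space ℝⁿ, for points p, q with q − p future-directed causal, the Lorentzian distance d(p,q) = √(−g(q−p, q−p)) equals the infimum over steep C¹ functions f of [f(q) − f(p)]⁺. In particular the infimum is attained (up to ε) by functions of the form f(x) = −g(v, x)/√(−g(v,v)) for suitable future-directed timelike vectors v. -/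
lemma mink_expand {n : ℕ} (v w : Fin (n + 1) → ℝ) :
    mink v w = -(v 0 * w 0) + ∑ i : Fin n, v i.succ * w i.succ := by
  rw [mink, Fin.sum_univ_succ]
  have h0 : (if (0 : Fin (n+1)).val = 0 then (-1:ℝ) else 1) * v 0 * w 0 = -(v 0 * w 0) := by
    simp
  rw [h0]
  congr 1
  apply Finset.sum_congr rfl
  intro i _
  simp [Fin.val_succ]

lemma mink_comm {n : ℕ} (v w : Fin n → ℝ) : mink v w = mink w v :=
  Finset.sum_congr rfl fun i _ => by ring

lemma mink_sub_right {n : ℕ} (v x y : Fin n → ℝ) :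
    mink v (x - y) = mink v x - mink v y := by
  rw [mink, mink, mink, ← Finset.sum_sub_distrib]
  exact Finset.sum_congr rfl fun i _ => by simp only [Pi.sub_apply]; split_ifs <;> ring

lemma mink_add_smul_single {n : ℕ} (u : Fin (n + 1) → ℝ) (δ : ℝ) (x : Fin (n + 1) → ℝ) :
    mink (u + δ • (Pi.single 0 1 : Fin (n + 1) → ℝ)) x = mink u x - δ * x 0 := by
  have h0 : (u + δ • (Pi.single 0 1 : Fin (n + 1) → ℝ)) 0 = u 0 + δ := by simp
  have hs : ∀ i : Fin n, (u + δ • (Pi.single 0 1 : Fin (n + 1) → ℝ)) i.succ = u i.succ := by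
    intro i
    simp [Pi.single_eq_of_ne (Fin.succ_ne_zero i)]
  rw [mink_expand, mink_expand, h0, Finset.sum_congr rfl (fun i _ => by rw [hs])]
  ring

lemma key_ineq_s4 {n : ℕ} (w u : Fin (n + 1) → ℝ) (hw : mink w w ≤ -1) (hw0 : w 0 < 0)
    (hu : mink u u ≤ 0) (hu0 : 0 ≤ u 0) : Real.sqrt (-(mink u u)) ≤ mink w u := by
  rw [mink_expand w w] at hw
  rw [mink_expand u u] at hu ⊢
  rw [mink_expand w u]
  set A := ∑ i : Fin n, w i.succ * w i.succ with hA
  set B := ∑ i : Fin n, u i.succ * u i.succ with hB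
  set C := ∑ i : Fin n, w i.succ * u i.succ with hC
  have hA0 : 0 ≤ A := Finset.sum_nonneg fun i _ => mul_self_nonneg _
  have hB0 : 0 ≤ B := Finset.sum_nonneg fun i _ => mul_self_nonneg _
  have hCS : C ^ 2 ≤ A * B := by
    have h := Finset.sum_mul_sq_le_sq_mul_sq Finset.univ (fun i : Fin n => w i.succ)
      (fun i : Fin n => u i.succ)
    calc C ^ 2 ≤ (∑ i : Fin n, w i.succ ^ 2) * ∑ i : Fin n, u i.succ ^ 2 := h
    _ = A * B := by
        rw [hA, hB]
        congr 1 <;> exact Finset.sum_congr rfl fun i _ => by ring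
  set a := -w 0 with ha
  set b := u 0 with hb
  have ha0 : 0 < a := by rw [ha]; linarith
  set c := Real.sqrt A with hc2
  set s := Real.sqrt B with hs2
  have hcA : c ^ 2 = A := Real.sq_sqrt hA0
  have hsB : s ^ 2 = B := Real.sq_sqrt hB0
  have hc0 : 0 ≤ c := Real.sqrt_nonneg _
  have hs0 : 0 ≤ s := Real.sqrt_nonneg _
  have hAB : A * B = (c * s) ^ 2 := by rw [← hcA, ← hsB]; ring
  have hCcs : -C ≤ c * s := by
    nlinarith [sq_nonneg (C + c * s), mul_nonneg hc0 hs0]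
  have haA : c ^ 2 + 1 ≤ a ^ 2 := by nlinarith
  have hbB : s ^ 2 ≤ b ^ 2 := by nlinarith
  have hsb : s ≤ b := (pow_le_pow_iff_left₀ hs0 hu0 two_ne_zero).mp hbB
  have hca : c ≤ a := (pow_le_pow_iff_left₀ hc0 ha0.le two_ne_zero).mp (by linarith)
  have hcsab : c * s ≤ a * b := mul_le_mul hca hsb hs0 ha0.le
  have hmain : b * b - B ≤ (a * b - c * s) ^ 2 := by nlinarith [sq_nonneg (c*b - a*s)]
  have hkey : Real.sqrt (b * b - B) ≤ a * b - c * s := by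
    calc Real.sqrt (b * b - B) ≤ Real.sqrt ((a * b - c * s) ^ 2) := Real.sqrt_le_sqrt hmain
    _ = |a * b - c * s| := Real.sqrt_sq_eq_abs _
    _ = a * b - c * s := abs_of_nonneg (by linarith)
  calc Real.sqrt (-(-(b * b) + B)) = Real.sqrt (b * b - B) := by ring_nf
  _ ≤ a * b - c * s := hkey
  _ ≤ a * b + C := by linarith
  _ = -(w 0 * u 0) + C := by rw [ha, hb]; ring

lemma fv_hasFDerivAt {n : ℕ} (v : Fin n → ℝ) (N : ℝ) (x : Fin n → ℝ) :
    HasFDerivAt (fun x : Fin n → ℝ => -(mink v x) / N)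
      (∑ i : Fin n, (-((if i.val = 0 then (-1 : ℝ) else 1) * v i) / N) •
        (ContinuousLinearMap.proj i : (Fin n → ℝ) →L[ℝ] ℝ)) x := by
  have heq : (fun x : Fin n → ℝ => -(mink v x) / N) =
      fun x => ∑ i : Fin n, (-((if i.val = 0 then (-1 : ℝ) else 1) * v i) / N) * x i := by
    funext y
    rw [mink, ← Finset.sum_neg_distrib, Finset.sum_div]
    exact Finset.sum_congr rfl fun i _ => by ring
  rw [heq]
  apply HasFDerivAt.fun_sum
  intro i _
  exact ((ContinuousLinearMap.proj i : (Fin n → ℝ) →L[ℝ] ℝ).hasFDerivAt (x := x)).const_mul _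

lemma fv_pd {n : ℕ} (v : Fin n → ℝ) (N : ℝ) (x : Fin n → ℝ) (i : Fin n) :
    pd (fun x : Fin n → ℝ => -(mink v x) / N) i x
      = -((if i.val = 0 then (-1 : ℝ) else 1) * v i) / N := by
  rw [pd, (fv_hasFDerivAt v N x).fderiv]
  simp [ContinuousLinearMap.proj_apply, Pi.single_apply, Finset.sum_ite_eq']

lemma fv_mgrad {n : ℕ} (v : Fin n → ℝ) (N : ℝ) (x : Fin n → ℝ) :
    mgrad (fun x : Fin n → ℝ => -(mink v x) / N) x = fun i => -(v i) / N := by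
  funext i
  rw [mgrad, fv_pd]
  split_ifs <;> ring

lemma fv_contDiff {n : ℕ} (v : Fin n → ℝ) (N : ℝ) :
    ContDiff ℝ 1 (fun x : Fin n → ℝ => -(mink v x) / N) := by
  apply ContDiff.div_const
  apply ContDiff.neg
  unfold mink
  apply ContDiff.sum
  intro i _
  exact contDiff_const.mul ((ContinuousLinearMap.proj i : (Fin n → ℝ) →L[ℝ] ℝ).contDiff)

lemma fv_steep {n : ℕ} (v : Fin (n + 1) → ℝ) (hv : mink v v < 0) (hv0 : 0 < v 0) :
    ∀ x, mink (mgrad (fun x : Fin (n+1) → ℝ => -(mink v x) / Real.sqrt (-(mink v v))) x)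
          (mgrad (fun x : Fin (n+1) → ℝ => -(mink v x) / Real.sqrt (-(mink v v))) x) ≤ -1 ∧
        mgrad (fun x : Fin (n+1) → ℝ => -(mink v x) / Real.sqrt (-(mink v v))) x 0 < 0 := by
  intro x
  set N := Real.sqrt (-(mink v v)) with hN
  have hN0 : 0 < N := Real.sqrt_pos.mpr (by linarith)
  have hN2 : N ^ 2 = -(mink v v) := Real.sq_sqrt (by linarith)
  rw [fv_mgrad]
  constructor
  · have : mink (fun i => -(v i) / N) (fun i : Fin (n+1) => -(v i) / N)
        = mink v v / N ^ 2 := by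
      rw [mink, mink, Finset.sum_div]
      exact Finset.sum_congr rfl fun i _ => by field_simp
    rw [this, hN2, div_neg, div_self (by linarith)]
  · exact div_neg_of_neg_of_pos (by linarith) hN0

lemma fderiv_eq_mink_mgrad {n : ℕ} (f : (Fin n → ℝ) → ℝ) (x u : Fin n → ℝ) :
    fderiv ℝ f x u = mink (mgrad f x) u := by
  have hu : u = ∑ i : Fin n, u i • (Pi.single i (1 : ℝ) : Fin n → ℝ) := by
    funext j
    simp [Pi.single_apply, Finset.sum_ite_eq', Finset.sum_apply]
  calc fderiv ℝ f x u
      = fderiv ℝ f x (∑ i : Fin n, u i • (Pi.single i (1:ℝ) : Fin n → ℝ)) := by rw [← hu]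
  _ = ∑ i : Fin n, u i • fderiv ℝ f x (Pi.single i (1:ℝ)) := by
      rw [map_sum]
      exact Finset.sum_congr rfl fun i _ => by rw [map_smul]
  _ = mink (mgrad f x) u := by
      rw [mink]
      exact Finset.sum_congr rfl fun i _ => by
        rw [mgrad, pd]; split_ifs <;> simp <;> ring

lemma mvt_lb {n : ℕ} (p q : Fin (n + 1) → ℝ)
    (hc : mink (q - p) (q - p) ≤ 0) (hfd : 0 ≤ (q - p) 0)
    (f : (Fin (n + 1) → ℝ) → ℝ) (hf : ContDiff ℝ 1 f)
    (hsteep : ∀ x, mink (mgrad f x) (mgrad f x) ≤ -1 ∧ mgrad f x 0 < 0) :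
    Real.sqrt (-(mink (q - p) (q - p))) ≤ f q - f p := by
  set u := q - p with hu
  set φ := fun t : ℝ => f (p + t • u) with hφ
  have hline : ∀ t : ℝ, HasDerivAt (fun s : ℝ => p + s • u) u t := by
    intro t
    simpa using ((hasDerivAt_id t).smul_const u).const_add p
  have hder : ∀ t : ℝ, HasDerivAt φ (fderiv ℝ f (p + t • u) u) t := fun t =>
    ((hf.differentiable one_ne_zero (p + t • u)).hasFDerivAt).comp_hasDerivAt t (hline t)
  have hcont : ContinuousOn φ (Set.Icc 0 1) :=
    (hf.continuous.comp (by continuity)).continuousOn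
  obtain ⟨c, _, hslope⟩ := exists_hasDerivAt_eq_slope φ
    (fun t => fderiv ℝ f (p + t • u) u) (by norm_num) hcont (fun t _ => hder t)
  have h1 : φ 1 = f q := by simp [hφ, hu]
  have h0 : φ 0 = f p := by simp [hφ]
  have hkey : Real.sqrt (-(mink u u)) ≤ fderiv ℝ f (p + c • u) u := by
    rw [fderiv_eq_mink_mgrad]
    exact key_ineq_s4 _ _ (hsteep _).1 (hsteep _).2 hc hfd
  rw [hslope, h1, h0] at hkey
  simpa using hkey

lemma construct {n : ℕ} (p q : Fin (n + 1) → ℝ)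
    (hc : mink (q - p) (q - p) ≤ 0) (hfd : 0 ≤ (q - p) 0) {ε : ℝ} (hε : 0 < ε) :
    ∃ v : Fin (n + 1) → ℝ, mink v v < 0 ∧ 0 < v 0 ∧
      max 0 ((fun x => -(mink v x) / Real.sqrt (-(mink v v))) q -
             (fun x => -(mink v x) / Real.sqrt (-(mink v v))) p) ≤
        Real.sqrt (-(mink (q - p) (q - p))) + ε := by
  set u := q - p with hu
  set D := Real.sqrt (-(mink u u)) with hD
  have hD0 : 0 ≤ D := Real.sqrt_nonneg _
  have hD2 : D ^ 2 = -(mink u u) := Real.sq_sqrt (by linarith)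
  set δ := min 1 (ε ^ 2 / (2 * u 0 + 1)) with hδdef
  have hden : 0 < 2 * u 0 + 1 := by linarith
  have hδ0 : 0 < δ := lt_min one_pos (div_pos (pow_pos hε 2) hden)
  have hδ1 : δ ≤ 1 := min_le_left _ _
  have hδ2 : δ ≤ ε ^ 2 / (2 * u 0 + 1) := min_le_right _ _
  have hδε : 2 * δ * u 0 + δ ^ 2 ≤ ε ^ 2 := by
    have h1 : δ * (2 * u 0 + δ) ≤ δ * (2 * u 0 + 1) := by nlinarith
    have h2 : δ * (2 * u 0 + 1) ≤ ε ^ 2 := by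
      rw [← div_mul_cancel₀ (ε ^ 2) (ne_of_gt hden)]
      exact mul_le_mul_of_nonneg_right hδ2 hden.le
    nlinarith
  set v := u + δ • (Pi.single 0 1 : Fin (n + 1) → ℝ) with hv
  have hv0 : v 0 = u 0 + δ := by simp [hv]
  have hvu : mink v u = mink u u - δ * u 0 := mink_add_smul_single u δ u
  have hvv : mink v v = mink u u - 2 * δ * u 0 - δ ^ 2 := by
    rw [hv, mink_add_smul_single, mink_comm, mink_add_smul_single]
    simp
    ring
  have hvvneg : mink v v < 0 := by
    rw [hvv]
    nlinarith [mul_nonneg hδ0.le hfd]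
  set N := Real.sqrt (-(mink v v)) with hN
  have hN0 : 0 < N := Real.sqrt_pos.mpr (by linarith)
  have hN2 : N ^ 2 = -(mink v v) := Real.sq_sqrt (by linarith)
  have hdiff : -(mink v q) / N - -(mink v p) / N = (D ^ 2 + δ * u 0) / N := by
    rw [div_sub_div_same]
    congr 1
    have h1 : -(mink v q) - -(mink v p) = -(mink v u) := by
      rw [hu, mink_sub_right]; ring
    rw [h1, hvu]
    linear_combination -hD2
  have hnum0 : 0 ≤ D ^ 2 + δ * u 0 := by nlinarith [mul_nonneg hδ0.le hfd]
  have hNle : N ≤ D + ε := by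
    have h2 : -(mink v v) ≤ (D + ε) ^ 2 := by
      rw [hvv]
      nlinarith [mul_nonneg hD0 hε.le]
    calc N ≤ Real.sqrt ((D + ε) ^ 2) := Real.sqrt_le_sqrt h2
    _ = D + ε := Real.sqrt_sq (by linarith)
  have hdle : (D ^ 2 + δ * u 0) / N ≤ N := by
    rw [div_le_iff₀ hN0]
    nlinarith [mul_nonneg hδ0.le hfd, sq_nonneg δ]
  refine ⟨v, hvvneg, by rw [hv0]; linarith, ?_⟩
  have hfinal : -(mink v q) / N - -(mink v p) / N ≤ D + ε := by
    rw [hdiff]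
    linarith
  exact max_le (by linarith) hfinal

/-- In Minkowski space, for `q − p` future-directed causal, the Lorentzian distance
`d(p,q) = √(−g(q−p,q−p))` equals the infimum of `[f(q)−f(p)]⁺` over steep `C¹`
functions `f`; moreover the infimum is attained up to any `ε > 0` by the linear
functions `f_v(x) = −g(v,x)/√(−g(v,v))` for suitable future-directed timelike `v`. -/
theorem stmt4 (n : ℕ) (p q : Fin (n + 1) → ℝ)
    (hc : mink (q - p) (q - p) ≤ 0) (hfd : 0 ≤ (q - p) 0) :
    Real.sqrt (-(mink (q - p) (q - p))) =
      sInf {r : ℝ | ∃ f : (Fin (n + 1) → ℝ) → ℝ, ContDiff ℝ 1 f ∧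
        (∀ x, mink (mgrad f x) (mgrad f x) ≤ -1 ∧ mgrad f x 0 < 0) ∧
        r = max 0 (f q - f p)} ∧
    ∀ ε > (0 : ℝ), ∃ v : Fin (n + 1) → ℝ, mink v v < 0 ∧ 0 < v 0 ∧
      max 0 ((fun x => -(mink v x) / Real.sqrt (-(mink v v))) q -
             (fun x => -(mink v x) / Real.sqrt (-(mink v v))) p) ≤
        Real.sqrt (-(mink (q - p) (q - p))) + ε := by
  constructor
  · apply le_antisymm
    · apply le_csInf
      · obtain ⟨v, hv1, hv2, _⟩ := construct p q hc hfd (ε := 1) one_pos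
        exact ⟨_, ⟨_, fv_contDiff v _, fv_steep v hv1 hv2, rfl⟩⟩
      · rintro r ⟨f, hf, hsteep, rfl⟩
        exact le_max_of_le_right (mvt_lb p q hc hfd f hf hsteep)
    · apply le_of_forall_pos_le_add
      intro ε hε
      obtain ⟨v, hv1, hv2, hle⟩ := construct p q hc hfd hε
      refine csInf_le_of_le ?_ ?_ hle
      · exact ⟨0, by rintro r ⟨f, _, _, rfl⟩; exact le_max_left _ _⟩
      · exact ⟨_, fv_contDiff v _, fv_steep v hv1 hv2, rfl⟩
  · intro ε hε
    exact construct p q hc hfd hε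
end
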